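/- For each integer ℓ ≥ 1, the operator S_ℓ defined on L²(0,1) by S_ℓ[f](x) = f(x) - 4ℓ x^{2ℓ-1} ∫ₓ¹ t^{-2ℓ} f(t) dt is a bounded linear operator on L²(0,1). -/

import Mathlib

open MeasureTheory Set
open scoped ENNReal

noncomputable section Stmt2Aux

/-- the measure -/
abbrev μ01 : Measure ℝ := volume.restrict (Ioo (0:ℝ) 1)

instance : IsFiniteMeasure μ01 := by
  constructor
  rw [Measure.restrict_apply_univ]
  simp [Real.volume_Ioo]

/-- the integral operator part -/
def Kf (ℓ : ℕ) (f : ℝ → ℝ) (x : ℝ) : ℝ :=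
  4 * (ℓ:ℝ) * x ^ (2 * ℓ - 1) * ∫ t in Ioc x 1, (t ^ (2 * ℓ))⁻¹ * f t

lemma ae_ne_one : ∀ᵐ t : ℝ ∂volume, t ≠ 1 := by
  rw [ae_iff]
  simp only [not_not, setOf_eq_eq_singleton]
  exact measure_singleton 1

lemma Kf_congr {ℓ : ℕ} {f g : ℝ → ℝ} (h : f =ᵐ[μ01] g) :
    ∀ x ∈ Ioi (0:ℝ), Kf ℓ f x = Kf ℓ g x := by
  have h' : ∀ᵐ t ∂volume, t ∈ Ioo (0:ℝ) 1 → f t = g t :=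
    (ae_restrict_iff' measurableSet_Ioo).mp h
  intro x hx
  unfold Kf
  congr 1
  refine integral_congr_ae ?_
  have h1 : ∀ᵐ t ∂(volume.restrict (Ioc x 1)), t ≠ 1 := ae_restrict_of_ae ae_ne_one
  have h2 : ∀ᵐ t ∂(volume.restrict (Ioc x 1)), t ∈ Ioc x 1 := ae_restrict_mem measurableSet_Ioc
  filter_upwards [ae_restrict_of_ae h', h1, h2] with t hfg h1t h2t
  have ht : t ∈ Ioo (0:ℝ) 1 := ⟨lt_of_le_of_lt (le_of_lt hx) h2t.1, lt_of_le_of_ne h2t.2 h1t⟩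
  rw [hfg ht]

lemma Kf_congr_ae {ℓ : ℕ} {f g : ℝ → ℝ} (h : f =ᵐ[μ01] g) :
    Kf ℓ f =ᵐ[μ01] Kf ℓ g := by
  filter_upwards [ae_restrict_mem measurableSet_Ioo] with x hx
  exact Kf_congr h x hx.1

lemma Kf_measurable {ℓ : ℕ} {f : ℝ → ℝ} (hf : Measurable f) :
    Measurable (Kf ℓ f) := by
  have hφ : Measurable fun t : ℝ => (t ^ (2 * ℓ))⁻¹ * f t :=
    ((measurable_id.pow_const _).inv).mul hf
  have hset : MeasurableSet {p : ℝ × ℝ | p.1 < p.2 ∧ p.2 ≤ 1} :=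
    (measurableSet_lt measurable_fst measurable_snd).inter
      (measurable_snd measurableSet_Iic)
  have hF : Measurable ({p : ℝ × ℝ | p.1 < p.2 ∧ p.2 ≤ 1}.indicator
      (fun p : ℝ × ℝ => (p.2 ^ (2 * ℓ))⁻¹ * f p.2)) :=
    (hφ.comp measurable_snd).indicator hset
  have hI : Measurable fun x : ℝ => ∫ t in Ioc x 1, (t ^ (2 * ℓ))⁻¹ * f t := by
    have := MeasureTheory.StronglyMeasurable.integral_prod_right (ν := volume)
      (f := fun x t => {p : ℝ × ℝ | p.1 < p.2 ∧ p.2 ≤ 1}.indicator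
        (fun p : ℝ × ℝ => (p.2 ^ (2 * ℓ))⁻¹ * f p.2) (x, t)) hF.stronglyMeasurable
    have heq : (fun x : ℝ => ∫ t in Ioc x 1, (t ^ (2 * ℓ))⁻¹ * f t) =
        fun x : ℝ => ∫ t, {p : ℝ × ℝ | p.1 < p.2 ∧ p.2 ≤ 1}.indicator
          (fun p : ℝ × ℝ => (p.2 ^ (2 * ℓ))⁻¹ * f p.2) (x, t) := by
      ext x
      rw [← integral_indicator measurableSet_Ioc]
      refine integral_congr_ae (Filter.Eventually.of_forall fun t => ?_)
      simp only [Set.indicator_apply, mem_Ioc, mem_setOf_eq]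
    rw [heq]
    exact this.measurable
  exact (((measurable_const.mul measurable_const).mul
    (measurable_id.pow_const _)).mul hI)

lemma Kf_aestronglyMeasurable {ℓ : ℕ} {f : ℝ → ℝ} (hf : AEStronglyMeasurable f μ01) :
    AEStronglyMeasurable (Kf ℓ f) μ01 := by
  refine AEStronglyMeasurable.congr
    (Kf_measurable (ℓ := ℓ) hf.stronglyMeasurable_mk.measurable).aestronglyMeasurable
    (Kf_congr_ae hf.ae_eq_mk).symm

lemma lint_rpow_Ioc {c : ℝ} (hc : c < -1) {x : ℝ} (hx : 0 < x) (hx1 : x ≤ 1) :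
    ∫⁻ t in Ioc x 1, ENNReal.ofReal (t ^ c) ∂volume ≤
      ENNReal.ofReal (x ^ (c+1) * (1 / (-(c+1)))) := by
  have hInt : IntegrableOn (fun t : ℝ => t ^ c) (Ioc x 1) volume := by
    rw [← uIoc_of_le hx1, ← intervalIntegrable_iff]
    exact intervalIntegral.intervalIntegrable_rpow
      (Or.inr (by rw [uIcc_of_le hx1]; rintro ⟨h1, h2⟩; linarith))
  rw [← ofReal_integral_eq_lintegral_ofReal hInt ?_]
  · apply ENNReal.ofReal_le_ofReal
    rw [← intervalIntegral.integral_of_le hx1,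
      integral_rpow (Or.inr ⟨by linarith, by rw [uIcc_of_le hx1]; rintro ⟨h1, h2⟩; linarith⟩)]
    rw [Real.one_rpow]
    have hA : (0:ℝ) ≤ x ^ (c+1) := Real.rpow_nonneg (le_of_lt hx) _
    rw [div_le_iff_of_neg (by linarith : c + 1 < 0)]
    have h1 : x ^ (c+1) * (1 / -(c+1)) * (c+1) = -(x ^ (c+1)) := by
      field_simp
      rw [div_self (by linarith : c + 1 ≠ 0)]
    rw [h1]
    linarith
  · filter_upwards [ae_restrict_mem measurableSet_Ioc] with t ht
    exact Real.rpow_nonneg (le_of_lt (lt_trans hx ht.1)) c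

lemma lint_rpow_Ioo0 {c : ℝ} (hc : -1 < c) (hc0 : c + 1 ≠ 0) {t : ℝ} (ht : 0 < t) :
    ∫⁻ x in Ioo (0:ℝ) t, ENNReal.ofReal (x ^ c) ∂volume ≤
      ENNReal.ofReal (t ^ (c+1) * (1 / (c+1))) := by
  have hInt : IntegrableOn (fun x : ℝ => x ^ c) (Ioc (0:ℝ) t) volume := by
    rw [← uIoc_of_le (le_of_lt ht), ← intervalIntegrable_iff]
    exact intervalIntegral.intervalIntegrable_rpow' hc
  rw [setLIntegral_congr Ioo_ae_eq_Ioc]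
  rw [← ofReal_integral_eq_lintegral_ofReal hInt ?_]
  · apply ENNReal.ofReal_le_ofReal
    rw [← intervalIntegral.integral_of_le (le_of_lt ht), integral_rpow (Or.inl hc)]
    rw [Real.zero_rpow hc0, sub_zero, div_eq_mul_inv, mul_one_div, div_eq_mul_inv]
  · filter_upwards [ae_restrict_mem measurableSet_Ioc] with s hs
    exact Real.rpow_nonneg (le_of_lt hs.1) c

/-- The constant -/
def Cc (ℓ : ℕ) : ℝ≥0∞ :=
  ENNReal.ofReal (16 * (ℓ:ℝ)^2) * ENNReal.ofReal (1 / (2*(ℓ:ℝ) - 1/2)) *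
    ENNReal.ofReal (1 / (2*(ℓ:ℝ) - 1/2))

lemma Cc_ne_top (ℓ : ℕ) : Cc ℓ ≠ ∞ := by
  unfold Cc
  finiteness

lemma psi_ne_top {f : ℝ → ℝ} (w : ℝ) (t : ℝ) :
    ENNReal.ofReal w * (‖f t‖₊ : ℝ≥0∞) ^ (2:ℝ) ≠ ∞ :=
  ENNReal.mul_ne_top ENNReal.ofReal_ne_top
    (ENNReal.rpow_ne_top_of_nonneg (by norm_num) ENNReal.coe_ne_top)

/-- Pointwise Cauchy-Schwarz step -/
lemma stepA {ℓ : ℕ} (hℓ : 1 ≤ ℓ) {f : ℝ → ℝ} (hf : Measurable f) {x : ℝ}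
    (hx : x ∈ Ioo (0:ℝ) 1) :
    (‖Kf ℓ f x‖₊ : ℝ≥0∞) ^ (2:ℝ) ≤
      ENNReal.ofReal (16 * (ℓ:ℝ)^2 / (2*(ℓ:ℝ) - 1/2)) *
        (ENNReal.ofReal (x ^ (2*(ℓ:ℝ) - 3/2)) *
          ∫⁻ t in Ioc x 1,
            ENNReal.ofReal (t ^ (1/2 - 2*(ℓ:ℝ))) * (‖f t‖₊ : ℝ≥0∞) ^ (2:ℝ) ∂volume) := by
  obtain ⟨hx0, hx1⟩ := hx
  have hM1 : (1:ℝ) ≤ (ℓ:ℝ) := by exact_mod_cast hℓ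
  set M := (ℓ:ℝ) with hM
  set u : ℝ → ℝ≥0∞ := fun t => ENNReal.ofReal (t ^ (-M - 1/4)) with hu_def
  set v : ℝ → ℝ≥0∞ := fun t => ENNReal.ofReal (t ^ (-M + 1/4)) * (‖f t‖₊ : ℝ≥0∞) with hv_def
  have hu : Measurable u := by
    apply ENNReal.measurable_ofReal.comp
    measurability
  have hv : Measurable v := by
    apply Measurable.mul _ hf.nnnorm.coe_nnreal_ennreal
    apply ENNReal.measurable_ofReal.comp
    measurability
  -- coefficient
  have hcoef : (0:ℝ) ≤ 4 * M * x ^ (2*ℓ - 1) := by positivity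
  have hxr : (x:ℝ) ^ (2*ℓ - 1) = x ^ (2*M - 1) := by
    rw [← Real.rpow_natCast x (2*ℓ - 1)]
    congr 1
    push_cast [Nat.cast_sub (by omega : 1 ≤ 2*ℓ)]
    ring
  have hcoef' : (0:ℝ) ≤ 4 * M * x ^ (2*M - 1) := by rw [← hxr]; exact hcoef
  -- step 1 : enorm bound by lintegral
  have h1 : (‖Kf ℓ f x‖₊ : ℝ≥0∞) ≤ ENNReal.ofReal (4 * M * x ^ (2*M - 1)) *
      ∫⁻ t in Ioc x 1, (‖(t ^ (2*ℓ))⁻¹ * f t‖₊ : ℝ≥0∞) ∂volume := by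
    unfold Kf
    rw [nnnorm_mul, ENNReal.coe_mul, (show ((‖4 * M * x ^ (2*ℓ - 1)‖₊ : ℝ≥0∞)) = ENNReal.ofReal (4 * M * x ^ (2*ℓ - 1)) from Real.enorm_eq_ofReal hcoef), hxr]
    exact mul_le_mul_right (enorm_integral_le_lintegral_enorm _) _
  -- step 2 : split the integrand
  have h2 : ∫⁻ t in Ioc x 1, (‖(t ^ (2*ℓ))⁻¹ * f t‖₊ : ℝ≥0∞) ∂volume =
      ∫⁻ t in Ioc x 1, (u * v) t ∂volume := by
    refine setLIntegral_congr_fun measurableSet_Ioc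
      (fun t ht => ?_)
    have ht0 : 0 < t := lt_trans hx0 ht.1
    have hsplit : (t ^ (2*ℓ) : ℝ)⁻¹ = t ^ (-M - 1/4) * t ^ (-M + 1/4) := by
      rw [← Real.rpow_add ht0]
      rw [show (-M - 1/4) + (-M + 1/4) = -(2*M) by ring]
      rw [Real.rpow_neg (le_of_lt ht0)]
      congr 1
      rw [← Real.rpow_natCast t (2*ℓ)]
      congr 1
      push_cast; ring
    rw [nnnorm_mul, ENNReal.coe_mul, (show ((‖(t ^ (2*ℓ) : ℝ)⁻¹‖₊ : ℝ≥0∞)) = ENNReal.ofReal (t ^ (2*ℓ))⁻¹ from Real.enorm_eq_ofReal (by positivity)), hsplit,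
      ENNReal.ofReal_mul (Real.rpow_nonneg (le_of_lt ht0) _)]
    simp only [Pi.mul_apply, hu_def, hv_def]
    ring
  -- step 3 : Hölder
  have h3 := ENNReal.lintegral_mul_le_Lp_mul_Lq (volume.restrict (Ioc x 1))
    Real.HolderConjugate.two_two hu.aemeasurable hv.aemeasurable
  -- A: the first factor
  have hA : ∫⁻ t in Ioc x 1, u t ^ (2:ℝ) ∂volume =
      ∫⁻ t in Ioc x 1, ENNReal.ofReal (t ^ (-(2*M) - 1/2)) ∂volume := by
    refine setLIntegral_congr_fun measurableSet_Ioc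
      (fun t ht => ?_)
    have ht0 : (0:ℝ) ≤ t := le_of_lt (lt_trans hx0 ht.1)
    simp only [hu_def]
    rw [ENNReal.ofReal_rpow_of_nonneg (Real.rpow_nonneg ht0 _) (by norm_num),
      ← Real.rpow_mul ht0, show ((-M - 1/4) * (2:ℝ)) = -(2*M) - 1/2 by ring]
  have hAle : ∫⁻ t in Ioc x 1, ENNReal.ofReal (t ^ (-(2*M) - 1/2)) ∂volume ≤
      ENNReal.ofReal (x ^ (1/2 - 2*M) * (1 / (2*M - 1/2))) := by
    have := lint_rpow_Ioc (c := -(2*M) - 1/2) (by linarith) hx0 (le_of_lt hx1)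
    convert this using 3 <;> ring
  -- B: the second factor
  have hB : ∫⁻ t in Ioc x 1, v t ^ (2:ℝ) ∂volume =
      ∫⁻ t in Ioc x 1,
        ENNReal.ofReal (t ^ (1/2 - 2*M)) * (‖f t‖₊ : ℝ≥0∞) ^ (2:ℝ) ∂volume := by
    refine setLIntegral_congr_fun measurableSet_Ioc
      (fun t ht => ?_)
    have ht0 : (0:ℝ) ≤ t := le_of_lt (lt_trans hx0 ht.1)
    simp only [hv_def]
    rw [ENNReal.mul_rpow_of_nonneg _ _ (by norm_num : (0:ℝ) ≤ 2),
      ENNReal.ofReal_rpow_of_nonneg (Real.rpow_nonneg ht0 _) (by norm_num),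
      ← Real.rpow_mul ht0, show ((-M + 1/4) * (2:ℝ)) = 1/2 - 2*M by ring]
  -- assemble
  have hfull : (‖Kf ℓ f x‖₊ : ℝ≥0∞) ≤ ENNReal.ofReal (4*M*x^(2*M-1)) *
      ((∫⁻ t in Ioc x 1, u t ^ (2:ℝ) ∂volume) ^ (1/2:ℝ) *
        (∫⁻ t in Ioc x 1, v t ^ (2:ℝ) ∂volume) ^ (1/2:ℝ)) := by
    refine h1.trans ?_
    rw [h2]
    exact mul_le_mul_right h3 _
  have hsq : (‖Kf ℓ f x‖₊ : ℝ≥0∞) ^ (2:ℝ) ≤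
      ENNReal.ofReal (4*M*x^(2*M-1)) ^ (2:ℝ) *
        ((∫⁻ t in Ioc x 1, u t ^ (2:ℝ) ∂volume) *
          (∫⁻ t in Ioc x 1, v t ^ (2:ℝ) ∂volume)) := by
    refine (ENNReal.rpow_le_rpow hfull (by norm_num : (0:ℝ) ≤ 2)).trans (le_of_eq ?_)
    rw [ENNReal.mul_rpow_of_nonneg _ _ (by norm_num : (0:ℝ) ≤ 2),
      ENNReal.mul_rpow_of_nonneg _ _ (by norm_num : (0:ℝ) ≤ 2),
      ← ENNReal.rpow_mul, ← ENNReal.rpow_mul]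
    norm_num
  have hA'le : (∫⁻ t in Ioc x 1, u t ^ (2:ℝ) ∂volume) ≤
      ENNReal.ofReal (x ^ (1/2 - 2*M) * (1 / (2*M - 1/2))) := hA.le.trans hAle
  have hD : (0:ℝ) < 2*M - 1/2 := by linarith
  have hreal : ((4*M*x^(2*M-1)) ^ (2:ℝ)) * (x ^ (1/2-2*M) * (1 / (2*M - 1/2))) =
      (16*M^2/(2*M - 1/2)) * x ^ (2*M - 3/2) := by
    have e1 : ((4*M*x^(2*M-1)) ^ (2:ℝ)) = 16*M^2 * (x ^ (2*M-1) * x ^ (2*M-1)) := by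
      rw [show (2:ℝ) = ((2:ℕ):ℝ) by norm_num, Real.rpow_natCast]
      ring
    rw [e1, ← Real.rpow_add hx0,
      show (16*M^2 * x ^ (2*M-1+(2*M-1))) * (x ^ (1/2-2*M) * (1/(2*M-1/2))) =
        (16*M^2) * (x ^ (2*M-1+(2*M-1)) * x ^ (1/2-2*M)) * (1/(2*M-1/2)) by ring,
      ← Real.rpow_add hx0,
      show (2*M-1+(2*M-1)) + (1/2-2*M) = 2*M - 3/2 by ring]
    ring
  refine hsq.trans ?_
  calc ENNReal.ofReal (4*M*x^(2*M-1)) ^ (2:ℝ) *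
        ((∫⁻ t in Ioc x 1, u t ^ (2:ℝ) ∂volume) *
          (∫⁻ t in Ioc x 1, v t ^ (2:ℝ) ∂volume))
      ≤ ENNReal.ofReal (4*M*x^(2*M-1)) ^ (2:ℝ) *
        (ENNReal.ofReal (x ^ (1/2 - 2*M) * (1 / (2*M - 1/2))) *
          (∫⁻ t in Ioc x 1, v t ^ (2:ℝ) ∂volume)) := by
        gcongr
    _ = _ := by
        rw [hB, ENNReal.ofReal_rpow_of_nonneg hcoef' (by norm_num : (0:ℝ) ≤ 2),
          ← mul_assoc, ← mul_assoc, ← ENNReal.ofReal_mul (Real.rpow_nonneg hcoef' _),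
          hreal, ENNReal.ofReal_mul (by positivity)]

/-- main Hardy bound -/
lemma Kf_bound {ℓ : ℕ} (hℓ : 1 ≤ ℓ) {f : ℝ → ℝ} (hf : Measurable f) :
    ∫⁻ x in Ioo (0:ℝ) 1, (‖Kf ℓ f x‖₊ : ℝ≥0∞) ^ (2:ℝ) ∂volume ≤
      Cc ℓ * ∫⁻ t in Ioo (0:ℝ) 1, (‖f t‖₊ : ℝ≥0∞) ^ (2:ℝ) ∂volume := by
  have hM1 : (1:ℝ) ≤ (ℓ:ℝ) := by exact_mod_cast hℓ
  set M := (ℓ:ℝ) with hM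
  set ψ : ℝ → ℝ≥0∞ :=
    fun t => ENNReal.ofReal (t ^ (1/2 - 2*M)) * (‖f t‖₊ : ℝ≥0∞) ^ (2:ℝ) with hψ
  have hψm : Measurable ψ := by
    refine Measurable.mul (ENNReal.measurable_ofReal.comp (by measurability)) ?_
    exact (hf.nnnorm.coe_nnreal_ennreal).pow_const _
  set wX : ℝ → ℝ≥0∞ := fun x => ENNReal.ofReal (x ^ (2*M - 3/2)) with hwX
  have hwXm : Measurable wX := ENNReal.measurable_ofReal.comp (by measurability)
  set G : ℝ → ℝ → ℝ≥0∞ := fun x t =>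
    {p : ℝ × ℝ | p.1 < p.2}.indicator (fun _ => (1:ℝ≥0∞)) (x, t) * (wX x * ψ t) with hG
  have hBx : ∀ x ∈ Ioo (0:ℝ) 1, wX x * ∫⁻ t in Ioc x 1, ψ t ∂volume
      = ∫⁻ t in Ioo (0:ℝ) 1, G x t ∂volume := by
    intro x hx
    have h1 : ∫⁻ t in Ioc x 1, ψ t ∂volume = ∫⁻ t in Ioo x 1, ψ t ∂volume :=
      (setLIntegral_congr Ioo_ae_eq_Ioc).symm
    have h2 : Ioo x 1 = Ioo (0:ℝ) 1 ∩ Ioi x := by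
      rw [Ioo_inter_Ioi, max_eq_right (le_of_lt hx.1)]
    have h3 : ∫⁻ t in Ioo x 1, ψ t ∂volume
        = ∫⁻ t in Ioo (0:ℝ) 1, (Ioi x).indicator ψ t ∂volume := by
      rw [lintegral_indicator measurableSet_Ioi,
        Measure.restrict_restrict measurableSet_Ioi, inter_comm, h2]
    rw [h1, h3, ← lintegral_const_mul' _ _ (ENNReal.ofReal_ne_top : wX x ≠ ∞)]
    refine lintegral_congr fun t => ?_
    by_cases hlt : x < t
    · simp [hG, hwX, indicator_of_mem, hlt, mem_Ioi]
    · simp [hG, hlt, mem_Ioi, indicator_of_notMem]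
  have hGm : AEMeasurable (fun p : ℝ × ℝ => G p.1 p.2) (μ01.prod μ01) := by
    apply Measurable.aemeasurable
    refine Measurable.mul ?_ ((hwXm.comp measurable_fst).mul (hψm.comp measurable_snd))
    exact measurable_one.indicator (measurableSet_lt measurable_fst measurable_snd)
  have hGt : ∀ t ∈ Ioo (0:ℝ) 1, ∫⁻ x in Ioo (0:ℝ) 1, G x t ∂volume ≤
      ENNReal.ofReal (1 / (2*M - 1/2)) * (‖f t‖₊ : ℝ≥0∞) ^ (2:ℝ) := by
    intro t ht
    have h0 : ∀ x, G x t = (Iio t).indicator wX x * ψ t := by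
      intro x; by_cases hlt : x < t
      · simp [hG, hlt, mem_Iio, indicator_of_mem]
      · simp [hG, hlt, mem_Iio, indicator_of_notMem]
    calc ∫⁻ x in Ioo (0:ℝ) 1, G x t ∂volume
        = ∫⁻ x in Ioo (0:ℝ) 1, (Iio t).indicator wX x * ψ t ∂volume :=
          lintegral_congr fun x => h0 x
      _ = (∫⁻ x in Ioo (0:ℝ) 1, (Iio t).indicator wX x ∂volume) * ψ t :=
          lintegral_mul_const' _ _ (psi_ne_top _ _)
      _ ≤ ENNReal.ofReal (t ^ (2*M - 1/2) * (1 / (2*M - 1/2))) * ψ t := by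
          gcongr
          have h2 : ∫⁻ x in Ioo (0:ℝ) 1, (Iio t).indicator wX x ∂volume
              = ∫⁻ x in Ioo (0:ℝ) t, wX x ∂volume := by
            rw [lintegral_indicator measurableSet_Iio,
              Measure.restrict_restrict measurableSet_Iio, inter_comm, Ioo_inter_Iio,
              min_eq_right (le_of_lt ht.2)]
          rw [h2]
          have := lint_rpow_Ioo0 (c := 2*M - 3/2) (by linarith) (by
            intro h; linarith [h]) ht.1
          convert this using 3
          · rfl
          all_goals ring
      _ = ENNReal.ofReal (1 / (2*M - 1/2)) * (‖f t‖₊ : ℝ≥0∞) ^ (2:ℝ) := by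
          rw [hψ, ← mul_assoc,
            ← ENNReal.ofReal_mul (mul_nonneg (Real.rpow_nonneg (le_of_lt ht.1) _)
              (one_div_nonneg.mpr (by linarith))),
            show (t ^ (2*M - 1/2) * (1 / (2*M - 1/2))) * t ^ (1/2 - 2*M)
              = (t ^ (2*M - 1/2) * t ^ (1/2 - 2*M)) * (1 / (2*M - 1/2)) by ring,
            ← Real.rpow_add ht.1,
            show (2*M - 1/2) + (1/2 - 2*M) = 0 by ring, Real.rpow_zero, one_mul]
  calc ∫⁻ x in Ioo (0:ℝ) 1, (‖Kf ℓ f x‖₊ : ℝ≥0∞) ^ (2:ℝ) ∂volume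
      ≤ ∫⁻ x in Ioo (0:ℝ) 1, ENNReal.ofReal (16*M^2/(2*M - 1/2)) *
          (wX x * ∫⁻ t in Ioc x 1, ψ t ∂volume) ∂volume := by
        refine lintegral_mono_ae ?_
        filter_upwards [ae_restrict_mem measurableSet_Ioo] with x hx
        exact stepA hℓ hf hx
    _ = ENNReal.ofReal (16*M^2/(2*M - 1/2)) *
          ∫⁻ x in Ioo (0:ℝ) 1, (wX x * ∫⁻ t in Ioc x 1, ψ t ∂volume) ∂volume :=
        lintegral_const_mul' _ _ ENNReal.ofReal_ne_top
    _ = ENNReal.ofReal (16*M^2/(2*M - 1/2)) *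
          ∫⁻ x in Ioo (0:ℝ) 1, ∫⁻ t in Ioo (0:ℝ) 1, G x t ∂volume ∂volume := by
        congr 1
        exact setLIntegral_congr_fun measurableSet_Ioo
          (fun x hx => hBx x hx)
    _ = ENNReal.ofReal (16*M^2/(2*M - 1/2)) *
          ∫⁻ t in Ioo (0:ℝ) 1, ∫⁻ x in Ioo (0:ℝ) 1, G x t ∂volume ∂volume := by
        rw [lintegral_lintegral_swap hGm]
    _ ≤ ENNReal.ofReal (16*M^2/(2*M - 1/2)) *
          ∫⁻ t in Ioo (0:ℝ) 1, ENNReal.ofReal (1 / (2*M - 1/2)) *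
            (‖f t‖₊ : ℝ≥0∞) ^ (2:ℝ) ∂volume := by
        refine mul_le_mul_right (lintegral_mono_ae ?_) _
        filter_upwards [ae_restrict_mem measurableSet_Ioo] with t ht
        exact hGt t ht
    _ = Cc ℓ * ∫⁻ t in Ioo (0:ℝ) 1, (‖f t‖₊ : ℝ≥0∞) ^ (2:ℝ) ∂volume := by
        rw [lintegral_const_mul' _ _ ENNReal.ofReal_ne_top, Cc, ← mul_assoc]
        congr 2
        rw [show 16*M^2/(2*M - 1/2) = 16*M^2 * (1/(2*M - 1/2)) by rw [mul_one_div],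
          ENNReal.ofReal_mul (by positivity)]

lemma Kf_memLp {ℓ : ℕ} (hℓ : 1 ≤ ℓ) {f : ℝ → ℝ} (hf : MemLp f 2 μ01) :
    MemLp (Kf ℓ f) 2 μ01 ∧
      eLpNorm (Kf ℓ f) 2 μ01 ≤ (Cc ℓ) ^ ((1:ℝ)/2) * eLpNorm f 2 μ01 := by
  obtain ⟨hmeas, hfin⟩ := hf
  have hgm : Measurable (hmeas.mk f) := hmeas.stronglyMeasurable_mk.measurable
  have hfg : f =ᵐ[μ01] hmeas.mk f := hmeas.ae_eq_mk
  have hKfg : Kf ℓ f =ᵐ[μ01] Kf ℓ (hmeas.mk f) := Kf_congr_ae hfg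
  have hKm : AEStronglyMeasurable (Kf ℓ f) μ01 := Kf_aestronglyMeasurable hmeas
  have hb := Kf_bound hℓ hgm
  have e2 : ∀ h : ℝ → ℝ, eLpNorm h 2 μ01 =
      (∫⁻ x in Ioo (0:ℝ) 1, (‖h x‖₊ : ℝ≥0∞) ^ (2:ℝ) ∂volume) ^ ((1:ℝ)/2) := by
    intro h
    rw [eLpNorm_eq_lintegral_rpow_enorm_toReal (by norm_num) (by norm_num)]
    norm_num
    rfl
  have hsn : eLpNorm (Kf ℓ f) 2 μ01 ≤ (Cc ℓ) ^ ((1:ℝ)/2) * eLpNorm f 2 μ01 := by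
    rw [eLpNorm_congr_ae hKfg, eLpNorm_congr_ae hfg, e2, e2]
    refine (ENNReal.rpow_le_rpow hb (by norm_num : (0:ℝ) ≤ 1/2)).trans (le_of_eq ?_)
    rw [ENNReal.mul_rpow_of_nonneg _ _ (by norm_num : (0:ℝ) ≤ 1/2)]
  refine ⟨⟨hKm, ?_⟩, hsn⟩
  refine lt_of_le_of_lt hsn ?_
  exact ENNReal.mul_lt_top
    (ENNReal.rpow_lt_top_of_nonneg (by norm_num) (Cc_ne_top ℓ)) hfin

lemma Kf_integrableOn {ℓ : ℕ} {f : ℝ → ℝ} (hf : MemLp f 2 μ01) {x : ℝ}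
    (hx : x ∈ Ioo (0:ℝ) 1) :
    IntegrableOn (fun t => (t ^ (2 * ℓ))⁻¹ * f t) (Ioc x 1) volume := by
  have hint : IntegrableOn f (Ioo (0:ℝ) 1) volume := hf.integrable one_le_two
  have hIoo : IntegrableOn f (Ioo x 1) volume :=
    hint.mono_set (Ioo_subset_Ioo (le_of_lt hx.1) le_rfl)
  have hIoc : IntegrableOn f (Ioc x 1) volume :=
    hIoo.congr_set_ae Ioo_ae_eq_Ioc.symm
  refine hIoc.bdd_mul (c := (x ^ (2*ℓ))⁻¹)
    (((measurable_id.pow_const _).inv).aestronglyMeasurable) ?_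
  filter_upwards [ae_restrict_mem measurableSet_Ioc] with t ht
  have hxpos : 0 < x := hx.1
  have htpos : 0 < t := lt_trans hxpos ht.1
  have hpow : x ^ (2*ℓ) ≤ t ^ (2*ℓ) := pow_le_pow_left₀ (le_of_lt hxpos) (le_of_lt ht.1) _
  have h1 : (0:ℝ) < x ^ (2*ℓ) := pow_pos hxpos _
  rw [Real.norm_eq_abs, abs_of_nonneg (by positivity)]
  exact inv_anti₀ h1 hpow

lemma Kf_add {ℓ : ℕ} {f g : ℝ → ℝ} (hf : MemLp f 2 μ01) (hg : MemLp g 2 μ01) :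
    Kf ℓ (f + g) =ᵐ[μ01] Kf ℓ f + Kf ℓ g := by
  filter_upwards [ae_restrict_mem measurableSet_Ioo] with x hx
  have h1 := Kf_integrableOn (ℓ := ℓ) hf hx
  have h2 := Kf_integrableOn (ℓ := ℓ) hg hx
  simp only [Kf, Pi.add_apply]
  simp only [mul_add]
  rw [integral_add h1 h2]
  ring

lemma Kf_smul {ℓ : ℕ} (c : ℝ) (f : ℝ → ℝ) :
    Kf ℓ (c • f) = c • Kf ℓ f := by
  ext x
  simp only [Kf, Pi.smul_apply, smul_eq_mul]
  simp only [mul_left_comm _ c]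
  rw [integral_const_mul]
  ring

end Stmt2Aux

theorem stmt2 (ℓ : ℕ) (hℓ : 1 ≤ ℓ) :
    ∃ T : (Lp ℝ 2 (volume.restrict (Ioo (0:ℝ) 1))) →L[ℝ]
          (Lp ℝ 2 (volume.restrict (Ioo (0:ℝ) 1))),
      ∀ f : Lp ℝ 2 (volume.restrict (Ioo (0:ℝ) 1)),
        ⇑(T f) =ᵐ[volume.restrict (Ioo (0:ℝ) 1)]
          fun x => f x - 4 * ℓ * x ^ (2 * ℓ - 1) * ∫ t in x..1, (t ^ (2 * ℓ))⁻¹ * f t := by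
  classical
  have hmem : ∀ f : Lp ℝ 2 μ01, MemLp (Kf ℓ ⇑f) 2 μ01 :=
    fun f => (Kf_memLp hℓ (Lp.memLp f)).1
  let T0 : Lp ℝ 2 μ01 →ₗ[ℝ] Lp ℝ 2 μ01 :=
  { toFun := fun f => f - (hmem f).toLp (Kf ℓ ⇑f)
    map_add' := by
      intro f g
      have h1 : Kf ℓ (⇑(f+g)) =ᵐ[μ01] Kf ℓ (⇑f + ⇑g) := Kf_congr_ae (Lp.coeFn_add f g)
      have h2 : Kf ℓ (⇑f + ⇑g) =ᵐ[μ01] Kf ℓ ⇑f + Kf ℓ ⇑g :=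
        Kf_add (Lp.memLp f) (Lp.memLp g)
      have h3 : (hmem (f+g)).toLp (Kf ℓ ⇑(f+g)) =
          (hmem f).toLp (Kf ℓ ⇑f) + (hmem g).toLp (Kf ℓ ⇑g) := by
        apply Lp.ext
        filter_upwards [(hmem (f+g)).coeFn_toLp,
          Lp.coeFn_add ((hmem f).toLp (Kf ℓ ⇑f)) ((hmem g).toLp (Kf ℓ ⇑g)),
          (hmem f).coeFn_toLp, (hmem g).coeFn_toLp, h1, h2] with x e0 e1 e2 e3 e4 e5
        rw [e0, e4, e5, e1]
        simp [e2, e3]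
      rw [h3]
      abel
    map_smul' := by
      intro c f
      have h1 : Kf ℓ (⇑(c • f)) =ᵐ[μ01] Kf ℓ (c • ⇑f) := Kf_congr_ae (Lp.coeFn_smul c f)
      have h3 : (hmem (c • f)).toLp (Kf ℓ ⇑(c • f)) = c • (hmem f).toLp (Kf ℓ ⇑f) := by
        apply Lp.ext
        filter_upwards [(hmem (c • f)).coeFn_toLp,
          Lp.coeFn_smul c ((hmem f).toLp (Kf ℓ ⇑f)), (hmem f).coeFn_toLp, h1]
          with x e0 e1 e2 e3
        rw [e0, e3, Kf_smul, e1, Pi.smul_apply, Pi.smul_apply, e2]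
      simp only [RingHom.id_apply]
      rw [h3, smul_sub]
    }
  have hbound : ∀ f : Lp ℝ 2 μ01, ‖T0 f‖ ≤ (1 + ((Cc ℓ) ^ ((1:ℝ)/2)).toReal) * ‖f‖ := by
    intro f
    have h4 := (Kf_memLp hℓ (Lp.memLp f)).2
    have h5 : ‖(hmem f).toLp (Kf ℓ ⇑f)‖ ≤ ((Cc ℓ) ^ ((1:ℝ)/2)).toReal * ‖f‖ := by
      rw [Lp.norm_toLp, Lp.norm_def]
      rw [← ENNReal.toReal_mul]
      refine ENNReal.toReal_mono ?_ h4
      exact ENNReal.mul_ne_top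
        (ENNReal.rpow_ne_top_of_nonneg (by norm_num) (Cc_ne_top ℓ))
        (Lp.eLpNorm_ne_top f)
    calc ‖T0 f‖ = ‖f - (hmem f).toLp (Kf ℓ ⇑f)‖ := rfl
      _ ≤ ‖f‖ + ‖(hmem f).toLp (Kf ℓ ⇑f)‖ := norm_sub_le _ _
      _ ≤ ‖f‖ + ((Cc ℓ) ^ ((1:ℝ)/2)).toReal * ‖f‖ := by linarith
      _ = (1 + ((Cc ℓ) ^ ((1:ℝ)/2)).toReal) * ‖f‖ := by ring
  refine ⟨T0.mkContinuous _ hbound, fun f => ?_⟩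
  have h5 : ⇑(T0 f) =ᵐ[μ01] ⇑f - ⇑((hmem f).toLp (Kf ℓ ⇑f)) := Lp.coeFn_sub _ _
  filter_upwards [h5, (hmem f).coeFn_toLp, ae_restrict_mem measurableSet_Ioo]
    with x hx1 hx2 hx3
  show (T0 f) x = _
  rw [hx1, Pi.sub_apply, hx2]
  unfold Kf
  rw [intervalIntegral.integral_of_le (le_of_lt hx3.2)]
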